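/- For every integer n ≥ 21, L_n(2π/3 - 1/n) > 0, where L_n(x) = (18n+24)sin(x) - 18n·sin(x/2) - 29.1. -/

import Mathlib

open Real

set_option maxHeartbeats 1000000

theorem stmt_16 (n : ℕ) (hn : 21 ≤ n) :
    0 < (18 * n + 24) * Real.sin (2 * π / 3 - 1 / n)
        - 18 * n * Real.sin ((2 * π / 3 - 1 / n) / 2) - 29.1 := by
  have hn0 : (21:ℝ) ≤ n := by exact_mod_cast hn
  have hnpos : (0:ℝ) < n := by linarith
  set t : ℝ := 1 / (n:ℝ) with ht
  have htpos : 0 < t := by positivity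
  have htle : t ≤ 1/21 := by
    rw [ht, div_le_div_iff₀ hnpos (by norm_num)]; linarith
  have hnt : (n:ℝ) * t = 1 := by rw [ht]; field_simp
  have h1 : Real.sin (2*π/3 - t) = Real.sqrt 3 / 2 * Real.cos t + 1/2 * Real.sin t := by
    have h : 2*π/3 - t = π - (π/3 + t) := by ring
    rw [h, Real.sin_pi_sub, Real.sin_add, Real.sin_pi_div_three, Real.cos_pi_div_three]
  have h2 : Real.sin ((2*π/3 - t)/2) = Real.sqrt 3 / 2 * Real.cos (t/2) - 1/2 * Real.sin (t/2) := by
    have h : (2*π/3 - t)/2 = π/3 - t/2 := by ring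
    rw [h, Real.sin_sub, Real.sin_pi_div_three, Real.cos_pi_div_three]
  rw [h1, h2]
  have hs3 : (1.732:ℝ) < Real.sqrt 3 := by
    nlinarith [Real.sq_sqrt (by norm_num : (0:ℝ) ≤ 3), Real.sqrt_nonneg 3]
  have hs3' : Real.sqrt 3 < 1.7321 := by
    nlinarith [Real.sq_sqrt (by norm_num : (0:ℝ) ≤ 3), Real.sqrt_nonneg 3]
  have hsin_t : t - t^3/4 < Real.sin t := by
    have := Real.sin_gt_sub_cube htpos; nlinarith [pow_pos htpos 3]
  have hsin_t2 : t/2 - (t/2)^3/4 < Real.sin (t/2) :=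
    by have := Real.sin_gt_sub_cube (x := t/2) (by linarith); nlinarith [pow_pos (half_pos htpos) 3]
  have hcos_t : 1 - t^2/2 ≤ Real.cos t := Real.one_sub_sq_div_two_le_cos
  have hcos_t2 : Real.cos (t/2) ≤ 1 := Real.cos_le_one _
  have hsin_t_pos : 0 < Real.sin t :=
    Real.sin_pos_of_pos_of_lt_pi htpos (by nlinarith [Real.pi_gt_three])
  have hA : (n:ℝ) * Real.cos t - (n:ℝ) * Real.cos (t/2) ≥ -t/2 := by
    nlinarith [hcos_t, hcos_t2, hnt, hnpos]
  have hB : (n:ℝ) * Real.sin t ≥ 1 - t^2/4 := by nlinarith [hsin_t, hnt, hnpos]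
  have hC : (n:ℝ) * Real.sin (t/2) ≥ 1/2 - t^2/32 := by nlinarith [hsin_t2, hnt, hnpos]
  have ht2 : t^2 ≤ (1/21)^2 := by nlinarith
  have hdle : Real.cos t ≤ Real.cos (t/2) :=
    Real.cos_le_cos_of_nonneg_of_le_pi (by linarith) (by nlinarith [Real.pi_gt_three]) (by linarith)
  have hd0 : (n:ℝ) * Real.cos t - (n:ℝ) * Real.cos (t/2) ≤ 0 := by nlinarith
  have e1 : 9 * Real.sqrt 3 * ((n:ℝ) * Real.cos t - (n:ℝ) * Real.cos (t/2)) ≥ -(9*1.7321/42) := by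
    nlinarith [hA, hd0, hs3', htle, htpos]
  have e2 : 9 * ((n:ℝ) * Real.sin t) ≥ 9 * (1 - (1/21)^2/4) := by nlinarith [hB, ht2]
  have e3 : 9 * ((n:ℝ) * Real.sin (t/2)) ≥ 9 * (1/2 - (1/21)^2/32) := by nlinarith [hC, ht2]
  have hcospos : 0 < Real.cos t := by nlinarith [hcos_t, ht2]
  have e4 : 12 * (Real.sqrt 3 * Real.cos t) ≥ 12 * 1.732 * (1 - (1/21)^2/2) := by
    nlinarith [hcos_t, ht2, hs3, hcospos]
  have expand : (18*(n:ℝ)+24)*(Real.sqrt 3/2*Real.cos t + 1/2*Real.sin t)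
      - 18*(n:ℝ)*(Real.sqrt 3/2*Real.cos (t/2) - 1/2*Real.sin (t/2)) - 29.1
    = 9*Real.sqrt 3*((n:ℝ)*Real.cos t - (n:ℝ)*Real.cos (t/2)) + 9*((n:ℝ)*Real.sin t)
      + 9*((n:ℝ)*Real.sin (t/2)) + 12*(Real.sqrt 3 * Real.cos t) + 12*Real.sin t - 29.1 := by
    ring
  rw [expand]
  linarith [e1, e2, e3, e4, hsin_t_pos]
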